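/- There exist a constant K̃₃ ∈ (0,1/2) and a positive constant C_{K̃₃,λ} such that for all x,y ∈ ℝ₊ with 0 < y/x − 1 < K̃₃, one has R_{Δ_λ}(x,y) ≥ C_{K̃₃,λ} · (1/(x^λ y^λ)) · (1/(y−x)). -/

import Mathlib

open MeasureTheory Real Set Filter

/-- The Riesz kernel `R_{Δ_λ}(x,y)`. -/
noncomputable def rieszKernel (lam x y : ℝ) : ℝ :=
  -(2 * lam / π) * ∫ θ in (0:ℝ)..π,
    ((x - y * Real.cos θ) * Real.sin θ ^ (2*lam - 1)) /
      ((x^2 + y^2 - 2*x*y*Real.cos θ) ^ (lam + 1))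

section Aux

lemma sinRpowIntegrable {q : ℝ} (hq : -1 < q) :
    IntervalIntegrable (fun θ => Real.sin θ ^ q) volume 0 π := by
  rcases le_or_gt 0 q with hq0 | hq0
  · exact (Real.continuous_sin.rpow_const (fun x => Or.inr hq0)).intervalIntegrable 0 π
  · have hmeas : AEStronglyMeasurable (fun θ => Real.sin θ ^ q)
        (volume.restrict (Set.uIoc (0:ℝ) π)) :=
      (Real.measurable_sin.pow_const q).aestronglyMeasurable
    have hg : IntervalIntegrable
        (fun θ => (2/π)^q * θ ^ q + (2/π)^q * (π - θ) ^ q) volume 0 π := by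
      apply IntervalIntegrable.add
      · exact (intervalIntegral.intervalIntegrable_rpow' hq).const_mul _
      · have := ((intervalIntegral.intervalIntegrable_rpow' hq (a := 0) (b := π)).const_mul
          ((2/π)^q)).comp_sub_left π
        simpa using this.symm
    apply IntervalIntegrable.mono_fun hg hmeas
    rw [Filter.EventuallyLE, ae_restrict_iff' measurableSet_uIoc]
    apply Filter.Eventually.of_forall
    intro θ hθ
    rw [Set.uIoc_of_le Real.pi_pos.le] at hθ
    obtain ⟨hθ0, hθπ⟩ := hθ
    have hsin0 : 0 ≤ Real.sin θ := Real.sin_nonneg_of_nonneg_of_le_pi hθ0.le hθπ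
    have hnorm : ‖Real.sin θ ^ q‖ = Real.sin θ ^ q := by
      rw [Real.norm_eq_abs, abs_of_nonneg (Real.rpow_nonneg hsin0 q)]
    rw [hnorm]
    rcases le_total θ (π/2) with h | h
    · have h1 : 2/π * θ ≤ Real.sin θ := Real.mul_le_sin hθ0.le h
      have h2 : (0:ℝ) < 2/π * θ := by positivity
      calc Real.sin θ ^ q ≤ (2/π * θ) ^ q := Real.rpow_le_rpow_of_nonpos h2 h1 hq0.le
        _ = (2/π)^q * θ ^ q := Real.mul_rpow (by positivity) hθ0.le
        _ ≤ (2/π)^q * θ ^ q + (2/π)^q * (π - θ)^q := by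
            have : (0:ℝ) ≤ (2/π)^q * (π - θ)^q := by
              apply mul_nonneg (Real.rpow_nonneg (by positivity) q)
                (Real.rpow_nonneg (by linarith) q)
            linarith
          _ ≤ ‖(2/π)^q * θ ^ q + (2/π)^q * (π - θ)^q‖ := le_abs_self _
    · rcases eq_or_lt_of_le hθπ with rfl | hθπ'
      · rw [Real.sin_pi, Real.zero_rpow hq0.ne]
        positivity
      · have h1 : 2/π * (π - θ) ≤ Real.sin θ := by
          rw [← Real.sin_pi_sub]
          exact Real.mul_le_sin (by linarith) (by linarith)
        have h2 : (0:ℝ) < 2/π * (π - θ) := by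
          have : 0 < π - θ := by linarith
          positivity
        calc Real.sin θ ^ q ≤ (2/π * (π - θ)) ^ q := Real.rpow_le_rpow_of_nonpos h2 h1 hq0.le
          _ = (2/π)^q * (π - θ) ^ q := Real.mul_rpow (by positivity) (by linarith)
          _ ≤ (2/π)^q * θ ^ q + (2/π)^q * (π - θ)^q := by
              have : (0:ℝ) ≤ (2/π)^q * θ^q := by
                apply mul_nonneg (Real.rpow_nonneg (by positivity) q) (Real.rpow_nonneg hθ0.le q)
              linarith
          _ ≤ ‖(2/π)^q * θ ^ q + (2/π)^q * (π - θ)^q‖ := le_abs_self _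

/-- The quadratic bound `1 - cos θ ≤ θ^2/2` for `0 ≤ θ ≤ 1/2`. -/
lemma oneSubCosLe {θ : ℝ} (h0 : 0 ≤ θ) (h1 : θ ≤ 1/2) : 1 - Real.cos θ ≤ θ^2/2 := by
  have hc : Real.cos θ = 1 - 2 * Real.sin (θ/2)^2 := by
    have h := Real.cos_two_mul (θ/2)
    have h2 := Real.sin_sq_add_cos_sq (θ/2)
    have he : 2*(θ/2) = θ := by ring
    rw [he] at h
    nlinarith
  have hs1 : Real.sin (θ/2) ≤ θ/2 := Real.sin_le (by linarith)
  have hs0 : 0 ≤ Real.sin (θ/2) := by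
    apply Real.sin_nonneg_of_nonneg_of_le_pi (by linarith)
    have := Real.pi_gt_three; linarith
  nlinarith

/-- lower bound for `sin θ ^ p` on `(0, 1/4]`. -/
lemma sinRpowLB {p θ : ℝ} (h0 : 0 < θ) (h1 : θ ≤ 1/4) :
    min 1 ((2/π)^p) * θ^p ≤ Real.sin θ ^ p := by
  have hpi := Real.pi_gt_three
  have hθπ : θ ≤ π/2 := by linarith
  have hlow : 2/π * θ ≤ Real.sin θ := Real.mul_le_sin h0.le hθπ
  have hup : Real.sin θ ≤ θ := Real.sin_le h0.le
  have h2π : (0:ℝ) < 2/π * θ := by positivity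
  rcases le_or_gt 0 p with hp | hp
  · calc min 1 ((2/π)^p) * θ^p ≤ (2/π)^p * θ^p := by
          apply mul_le_mul_of_nonneg_right (min_le_right _ _) (Real.rpow_nonneg h0.le p)
    _ = (2/π * θ)^p := (Real.mul_rpow (by positivity) h0.le).symm
    _ ≤ Real.sin θ ^ p := Real.rpow_le_rpow (by positivity) hlow hp
  · calc min 1 ((2/π)^p) * θ^p ≤ 1 * θ^p := by
          apply mul_le_mul_of_nonneg_right (min_le_left _ _) (Real.rpow_nonneg h0.le p)
    _ = θ^p := one_mul _
    _ ≤ Real.sin θ ^ p := by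
        apply Real.rpow_le_rpow_of_nonpos _ hup hp.le
        linarith [Real.sin_pos_of_pos_of_lt_pi (x := θ) h0 (by linarith)]

lemma cosBounds {θ : ℝ} (h0 : 0 < θ) (h1 : θ < π) :
    0 < 1 - Real.cos θ ∧ 0 < 1 + Real.cos θ := by
  have hs : 0 < Real.sin θ := Real.sin_pos_of_pos_of_lt_pi h0 h1
  have hsq := Real.sin_sq θ
  constructor <;> nlinarith [sq_nonneg (Real.cos θ - 1), sq_nonneg (Real.cos θ + 1)]

noncomputable def DD (x y θ : ℝ) : ℝ := x^2 + y^2 - 2*x*y*Real.cos θ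

lemma DD_lower {x y : ℝ} (hx : 0 < x) (hy : 0 < y) (θ : ℝ) : (y-x)^2 ≤ DD x y θ := by
  have := Real.cos_le_one θ
  unfold DD
  nlinarith [mul_nonneg (mul_pos hx hy).le (sub_nonneg.2 (Real.cos_le_one θ))]

lemma DD_pos {x y : ℝ} (hx : 0 < x) (hxy : x < y) (θ : ℝ) : 0 < DD x y θ :=
  lt_of_lt_of_le (by nlinarith) (DD_lower hx (hx.trans hxy) θ)

lemma DD_eq {x y θ : ℝ} : DD x y θ = (y-x)^2 + 2*(x*y)*(1 - Real.cos θ) := by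
  unfold DD; ring

lemma DD_cont {lam x y : ℝ} (hx : 0 < x) (hxy : x < y) :
    Continuous fun θ => ((DD x y θ)^(lam+1))⁻¹ := by
  apply Continuous.inv₀
  · apply Continuous.rpow_const _ (fun θ => Or.inl (DD_pos hx hxy θ).ne')
    unfold DD; continuity
  · intro θ; exact (Real.rpow_pos_of_pos (DD_pos hx hxy θ) _).ne'

lemma contMulSin {g : ℝ → ℝ} (hg : Continuous g) {p : ℝ} (hp : -1 < p) :
    IntervalIntegrable (fun θ => g θ * Real.sin θ ^ p) volume 0 π :=
  (sinRpowIntegrable hp).continuousOn_mul hg.continuousOn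

end Aux

set_option maxHeartbeats 2000000 in
/-- Lower bound near the diagonal: there exist `K̃₃ ∈ (0,1/2)` and `C > 0` such that for
`0 < y/x - 1 < K̃₃`, `R_{Δ_λ}(x,y) ≥ C (1/(x^λ y^λ)) (1/(y-x))`. -/
theorem riesz_kernel_lower_bound_diagonal (lam : ℝ) (hlam : 0 < lam) :
    ∃ K C : ℝ, 0 < K ∧ K < 1/2 ∧ 0 < C ∧
      ∀ x y : ℝ, 0 < x → 0 < y → 0 < y/x - 1 → y/x - 1 < K →
        C * (1 / (x ^ lam * y ^ lam)) * (1 / (y - x)) ≤ rieszKernel lam x y := by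
  have hπ := Real.pi_pos
  set p : ℝ := 2*lam - 1 with hp_def
  have hp : -1 < p := by simp only [hp_def]; linarith
  set β : ℝ := min (1/4) (lam/2) with hβ_def
  have hβ0 : 0 < β := by apply lt_min <;> [norm_num; linarith]
  have hβ14 : β ≤ 1/4 := min_le_left _ _
  have hβlam : β < lam := by
    rcases le_total lam (1/2) with h | h
    · calc β ≤ lam/2 := min_le_right _ _
      _ < lam := by linarith
    · calc β ≤ 1/4 := hβ14
      _ < lam := by linarith
  set q : ℝ := 2*β - 1 with hq_def
  have hq : -1 < q := by simp only [hq_def]; linarith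
  set B : ℝ := ∫ θ in (0:ℝ)..π, Real.sin θ ^ q with hB_def
  have hB0 : 0 ≤ B := by
    apply intervalIntegral.integral_nonneg hπ.le
    intro u hu
    exact Real.rpow_nonneg (Real.sin_nonneg_of_nonneg_of_le_pi hu.1 hu.2) q
  set clam : ℝ := min 1 ((2/π)^p) with hclam_def
  have hclam0 : 0 < clam := lt_min one_pos (Real.rpow_pos_of_pos (by positivity) p)
  set c1 : ℝ := clam/(2*lam*2^(lam+1)) with hc1_def
  have hc10 : 0 < c1 := by
    apply div_pos hclam0
    have : (0:ℝ) < 2^(lam+1) := Real.rpow_pos_of_pos two_pos _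
    positivity
  set C2 : ℝ := B/2 + 1 with hC2_def
  have hC21 : 1 ≤ C2 := by simp only [hC2_def]; linarith
  have hC20 : 0 < C2 := by linarith
  set K : ℝ := min (1/4) ((c1/(3*C2))^((1-2*β)⁻¹)) with hK_def
  have hK0 : 0 < K := by
    apply lt_min (by norm_num)
    exact Real.rpow_pos_of_pos (by positivity) _
  have hK14 : K ≤ 1/4 := min_le_left _ _
  have h12β : (0:ℝ) < 1 - 2*β := by linarith
  have hKpow : K^(1-2*β) ≤ c1/(3*C2) := by
    calc K^(1-2*β) ≤ ((c1/(3*C2))^((1-2*β)⁻¹))^(1-2*β) :=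
          Real.rpow_le_rpow hK0.le (min_le_right _ _) h12β.le
    _ = c1/(3*C2) := Real.rpow_inv_rpow (by positivity) h12β.ne'
  refine ⟨K, lam*c1/π, hK0, by linarith, by positivity, ?_⟩
  intro x y hx hy hyx1 hyxK
  -- basic facts
  have hxy : x < y := by
    have : 1 < y/x := by linarith
    calc x = x * 1 := (mul_one x).symm
    _ < x * (y/x) := by exact mul_lt_mul_of_pos_left this hx
    _ = y := by field_simp
  have ha : 0 < y - x := by linarith
  have hW : 0 < x*y := mul_pos hx hy
  have haK : y - x < K*x := by
    have : y/x < 1 + K := by linarith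
    calc y - x = (y/x - 1)*x := by field_simp
    _ < K*x := by apply mul_lt_mul_of_pos_right _ hx; linarith
  have hy32 : y ≤ (3/2)*x := by
    have h5 : K*x ≤ (1/4)*x := mul_le_mul_of_nonneg_right hK14 hx.le
    linarith
  -- integrability
  have hDpos : ∀ θ, 0 < DD x y θ := DD_pos hx hxy
  have hDinv : Continuous fun θ => ((DD x y θ)^(lam+1))⁻¹ := DD_cont hx hxy
  have hii1 : IntervalIntegrable (fun θ => Real.sin θ^p / (DD x y θ)^(lam+1)) volume 0 π := by
    have he : (fun θ => Real.sin θ^p / (DD x y θ)^(lam+1))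
        = fun θ => ((DD x y θ)^(lam+1))⁻¹ * Real.sin θ^p := by
      funext θ; rw [div_eq_mul_inv]; ring
    rw [he]; exact contMulSin hDinv hp
  have hii2 : IntervalIntegrable
      (fun θ => (1 - Real.cos θ) * Real.sin θ^p / (DD x y θ)^(lam+1)) volume 0 π := by
    have he : (fun θ => (1 - Real.cos θ) * Real.sin θ^p / (DD x y θ)^(lam+1))
        = fun θ => ((1 - Real.cos θ) * ((DD x y θ)^(lam+1))⁻¹) * Real.sin θ^p := by
      funext θ; rw [div_eq_mul_inv]; ring
    rw [he]
    exact contMulSin ((continuous_const.sub Real.continuous_cos).mul hDinv) hp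
  set I1 : ℝ := ∫ θ in (0:ℝ)..π, Real.sin θ^p / (DD x y θ)^(lam+1) with hI1_def
  set I2 : ℝ := ∫ θ in (0:ℝ)..π, (1 - Real.cos θ) * Real.sin θ^p / (DD x y θ)^(lam+1) with hI2_def
  have hker : rieszKernel lam x y = (2*lam/π) * ((y-x) * I1 - y * I2) := by
    rw [rieszKernel]
    have hsplit : (∫ θ in (0:ℝ)..π, ((x - y*Real.cos θ) * Real.sin θ ^ (2*lam - 1)) /
        ((x^2 + y^2 - 2*x*y*Real.cos θ) ^ (lam + 1)))
        = y * I2 - (y-x) * I1 := by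
      rw [hI1_def, hI2_def, ← intervalIntegral.integral_const_mul,
        ← intervalIntegral.integral_const_mul,
        ← intervalIntegral.integral_sub (hii2.const_mul y) (hii1.const_mul (y-x))]
      apply intervalIntegral.integral_congr
      intro θ _
      simp only [DD, hp_def]
      ring
    rw [hsplit]; ring
  -- the cutoff T
  set T : ℝ := (y-x)/Real.sqrt (x*y) with hT_def
  have hsq : 0 < Real.sqrt (x*y) := Real.sqrt_pos.2 hW
  have hT0 : 0 < T := div_pos ha hsq
  have hxsq : x ≤ Real.sqrt (x*y) := by
    have h1 : Real.sqrt (x^2) ≤ Real.sqrt (x*y) := by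
      apply Real.sqrt_le_sqrt
      rw [sq]; exact mul_le_mul_of_nonneg_left hxy.le hx.le
    rwa [Real.sqrt_sq hx.le] at h1
  have hT14 : T ≤ 1/4 := by
    calc T ≤ K*x/x := by
          apply div_le_div₀ (by positivity) haK.le hx hxsq
    _ = K := by field_simp
    _ ≤ 1/4 := hK14
  have hT2 : T^2 = (y-x)^2/(x*y) := by
    rw [hT_def, div_pow, Real.sq_sqrt hW.le]
  have hTπ : T ≤ π := by linarith [Real.pi_gt_three]
  have hsub1 : Set.uIcc (0:ℝ) T ⊆ Set.uIcc (0:ℝ) π := by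
    rw [Set.uIcc_of_le hT0.le, Set.uIcc_of_le hπ.le]
    exact Set.Icc_subset_Icc le_rfl hTπ
  have hsub2 : Set.uIcc T π ⊆ Set.uIcc (0:ℝ) π := by
    rw [Set.uIcc_of_le hTπ, Set.uIcc_of_le hπ.le]
    exact Set.Icc_subset_Icc hT0.le le_rfl
  have hsplitT : I1 = (∫ θ in (0:ℝ)..T, Real.sin θ^p / (DD x y θ)^(lam+1))
      + ∫ θ in T..π, Real.sin θ^p / (DD x y θ)^(lam+1) :=
    (intervalIntegral.integral_add_adjacent_intervals
      (hii1.mono_set hsub1) (hii1.mono_set hsub2)).symm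
  have htail : 0 ≤ ∫ θ in T..π, Real.sin θ^p / (DD x y θ)^(lam+1) := by
    apply intervalIntegral.integral_nonneg hTπ
    intro u hu
    apply div_nonneg (Real.rpow_nonneg
      (Real.sin_nonneg_of_nonneg_of_le_pi (by linarith [hu.1]) hu.2) p)
      (Real.rpow_nonneg (hDpos u).le _)
  have hmain : c1/((x*y)^lam * (y-x)^2)
      ≤ ∫ θ in (0:ℝ)..T, Real.sin θ^p / (DD x y θ)^(lam+1) := by
    have hstep : (∫ θ in (0:ℝ)..T, (clam/(2*(y-x)^2)^(lam+1)) * θ^p)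
        ≤ ∫ θ in (0:ℝ)..T, Real.sin θ^p / (DD x y θ)^(lam+1) := by
      rw [intervalIntegral.integral_of_le hT0.le, intervalIntegral.integral_of_le hT0.le]
      apply setIntegral_mono_on
      · exact ((intervalIntegral.intervalIntegrable_rpow'
          (a := (0:ℝ)) (b := T) hp).const_mul _).1
      · exact (hii1.mono_set hsub1).1
      · exact measurableSet_Ioc
      · intro θ hθ
        obtain ⟨hθ0, hθT⟩ := hθ
        have h1 := sinRpowLB (p := p) hθ0 (hθT.trans hT14)
        rw [← hclam_def] at h1
        have hDub : (DD x y θ)^(lam+1) ≤ (2*(y-x)^2)^(lam+1) := by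
          apply Real.rpow_le_rpow (hDpos θ).le _ (by linarith)
          rw [DD_eq]
          have h1c : 1 - Real.cos θ ≤ θ^2/2 := oneSubCosLe hθ0.le (by linarith)
          have hθT2 : θ^2 ≤ T^2 := pow_le_pow_left₀ hθ0.le hθT 2
          have h2 : (x*y)*θ^2 ≤ (x*y)*T^2 := mul_le_mul_of_nonneg_left hθT2 hW.le
          have h3 : (x*y)*T^2 = (y-x)^2 := by rw [hT2]; field_simp
          have h4 : 2*(x*y)*(1 - Real.cos θ) ≤ 2*(x*y)*(θ^2/2) :=
            mul_le_mul_of_nonneg_left h1c (by positivity)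
          linarith
        calc clam/(2*(y-x)^2)^(lam+1) * θ^p = clam * θ^p / (2*(y-x)^2)^(lam+1) := by ring
        _ ≤ Real.sin θ^p / (DD x y θ)^(lam+1) := by
            apply div_le_div₀ (Real.rpow_nonneg
              (Real.sin_nonneg_of_nonneg_of_le_pi hθ0.le (by linarith)) p) h1
              (Real.rpow_pos_of_pos (hDpos θ) _) hDub
    have hval : (∫ θ in (0:ℝ)..T, (clam/(2*(y-x)^2)^(lam+1)) * θ^p)
        = c1/((x*y)^lam * (y-x)^2) := by
      rw [intervalIntegral.integral_const_mul, integral_rpow (Or.inl hp),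
        Real.zero_rpow (by simp only [hp_def]; intro h; linarith : p + 1 ≠ 0), sub_zero]
      have hp1 : p + 1 = 2*lam := by simp only [hp_def]; ring
      have hE1 : T^(p+1) = (y-x)^(2*lam) / (x*y)^lam := by
        rw [hp1, hT_def, Real.div_rpow ha.le (Real.sqrt_nonneg _)]
        congr 1
        rw [Real.sqrt_eq_rpow, ← Real.rpow_mul hW.le,
          show (1:ℝ)/2*(2*lam) = lam by ring]
      have hE2 : (2*(y-x)^2)^(lam+1) = 2^(lam+1) * ((y-x)^(2*lam) * (y-x)^2) := by
        rw [Real.mul_rpow two_pos.le (sq_nonneg _)]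
        congr 1
        rw [← Real.rpow_two, ← Real.rpow_mul ha.le,
          show (2:ℝ)*(lam+1) = 2*lam + 2 by ring, Real.rpow_add ha, Real.rpow_two]
      rw [hE1, hE2, hp1, hc1_def]
      have h2p : (0:ℝ) < 2^(lam+1) := Real.rpow_pos_of_pos two_pos _
      have hA2 : (0:ℝ) < (y-x)^(2*lam) := Real.rpow_pos_of_pos ha _
      have hWl : (0:ℝ) < (x*y)^lam := Real.rpow_pos_of_pos hW _
      field_simp
    linarith [hstep, hval.symm.le, hval.le]
  have hI1low : c1/((x*y)^lam * (y-x)) ≤ (y-x)*I1 := by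
    have hI1ge : c1/((x*y)^lam*(y-x)^2) ≤ I1 := by rw [hsplitT]; linarith
    have hWl : (0:ℝ) < (x*y)^lam := Real.rpow_pos_of_pos hW _
    calc c1/((x*y)^lam * (y-x)) = (y-x) * (c1/((x*y)^lam*(y-x)^2)) := by
          field_simp
    _ ≤ (y-x)*I1 := mul_le_mul_of_nonneg_left hI1ge ha.le
  -- upper bound for I2
  have hA2βpos : (0:ℝ) < (y-x)^(2*β) := Real.rpow_pos_of_pos ha _
  have hWβpos : (0:ℝ) < (x*y)^(lam+1-β) := Real.rpow_pos_of_pos hW _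
  have hI2up : I2 ≤ (B/2)/((y-x)^(2*β) * (x*y)^(lam+1-β)) := by
    have hstep : I2 ≤ ∫ θ in (0:ℝ)..π,
        ((2:ℝ)^(lam-β)/((y-x)^(2*β)*(2*(x*y))^(lam+1-β))) * Real.sin θ^q := by
      rw [hI2_def, intervalIntegral.integral_of_le hπ.le, intervalIntegral.integral_of_le hπ.le]
      rw [← setIntegral_congr_set Ioo_ae_eq_Ioc]
      rw [← setIntegral_congr_set Ioo_ae_eq_Ioc]
      apply setIntegral_mono_on
      · exact hii2.1.mono_set Set.Ioo_subset_Ioc_self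
      · exact (((sinRpowIntegrable hq).const_mul _).1).mono_set Set.Ioo_subset_Ioc_self
      · exact measurableSet_Ioo
      · intro θ hθ
        obtain ⟨hθ0, hθπ⟩ := hθ
        have hs : 0 < Real.sin θ := Real.sin_pos_of_pos_of_lt_pi hθ0 hθπ
        obtain ⟨h1c, h1c'⟩ := cosBounds hθ0 hθπ
        have hDsplit : ((y-x)^2)^β * (2*(x*y)*(1-Real.cos θ))^(lam+1-β)
            ≤ (DD x y θ)^(lam+1) := by
          have he : (DD x y θ)^(lam+1) = (DD x y θ)^β * (DD x y θ)^(lam+1-β) := by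
            rw [← Real.rpow_add (hDpos θ), show β + (lam+1-β) = lam+1 by ring]
          rw [he]
          apply mul_le_mul
          · exact Real.rpow_le_rpow (sq_nonneg _) (DD_lower hx hy θ) hβ0.le
          · apply Real.rpow_le_rpow (by positivity) _ (by linarith)
            rw [DD_eq]; linarith [sq_nonneg (y-x)]
          · exact Real.rpow_nonneg (by positivity) _
          · exact Real.rpow_nonneg (hDpos θ).le _
        have e1 : 1 - Real.cos θ = Real.sin θ^2/(1+Real.cos θ) := by
          rw [eq_div_iff h1c'.ne', Real.sin_sq]; ring
        have g1 : (1-Real.cos θ)^(lam+1-β)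
            = Real.sin θ^(2*(lam+1-β)) * (1+Real.cos θ)^(-(lam+1-β)) := by
          rw [e1, Real.div_rpow (sq_nonneg _) h1c'.le, ← Real.rpow_two,
            ← Real.rpow_mul hs.le, Real.rpow_neg h1c'.le, div_eq_mul_inv]
        have g2 : Real.sin θ^q * Real.sin θ^(2*(lam+1-β))
            = Real.sin θ^(2:ℝ) * Real.sin θ^p := by
          rw [← Real.rpow_add hs, ← Real.rpow_add hs]
          congr 1
          rw [hq_def, hp_def]; ring
        have g3 : (1+Real.cos θ)^(lam-β) * (1+Real.cos θ)^(-(lam+1-β))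
            = (1+Real.cos θ)⁻¹ := by
          rw [← Real.rpow_add h1c', show lam-β + -(lam+1-β) = -1 by ring, Real.rpow_neg_one]
        have hsp : (1-Real.cos θ) * Real.sin θ^p
            = Real.sin θ^q * (1+Real.cos θ)^(lam-β) * (1-Real.cos θ)^(lam+1-β) := by
          rw [g1, e1, ← Real.rpow_two]
          calc Real.sin θ^(2:ℝ)/(1+Real.cos θ) * Real.sin θ^p
              = (Real.sin θ^q * Real.sin θ^(2*(lam+1-β)))
                * ((1+Real.cos θ)^(lam-β)*(1+Real.cos θ)^(-(lam+1-β))) := by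
                rw [g2, g3]; ring
            _ = Real.sin θ^q * (1+Real.cos θ)^(lam-β)
                * (Real.sin θ^(2*(lam+1-β))*(1+Real.cos θ)^(-(lam+1-β))) := by ring
        have hA2β : ((y-x)^2)^β = (y-x)^(2*β) := by
          rw [← Real.rpow_two, ← Real.rpow_mul ha.le]
        have hMul : (2*(x*y)*(1-Real.cos θ))^(lam+1-β)
            = (2*(x*y))^(lam+1-β) * (1-Real.cos θ)^(lam+1-β) :=
          Real.mul_rpow (by positivity) h1c.le
        have hmid : (1-Real.cos θ) * Real.sin θ^p
              / (((y-x)^2)^β * (2*(x*y)*(1-Real.cos θ))^(lam+1-β))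
            = (Real.sin θ^q * (1+Real.cos θ)^(lam-β))
              / ((y-x)^(2*β) * (2*(x*y))^(lam+1-β)) := by
          rw [hA2β, hMul, hsp]
          have hnz1 : ((1-Real.cos θ)^(lam+1-β)) ≠ 0 := (Real.rpow_pos_of_pos h1c _).ne'
          have hnz2 : ((y-x)^(2*β)) ≠ 0 := hA2βpos.ne'
          have hnz3 : ((2*(x*y))^(lam+1-β)) ≠ 0 :=
            (Real.rpow_pos_of_pos (by linarith) _).ne'
          field_simp
        have hc1le : (1+Real.cos θ)^(lam-β) ≤ (2:ℝ)^(lam-β) :=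
          Real.rpow_le_rpow h1c'.le (by linarith [Real.cos_le_one θ]) (by linarith)
        calc (1 - Real.cos θ) * Real.sin θ^p / (DD x y θ)^(lam+1)
            ≤ (1-Real.cos θ) * Real.sin θ^p
              / (((y-x)^2)^β * (2*(x*y)*(1-Real.cos θ))^(lam+1-β)) := by
              apply div_le_div_of_nonneg_left
                (mul_nonneg h1c.le (Real.rpow_nonneg hs.le p)) _ hDsplit
              apply mul_pos (Real.rpow_pos_of_pos (by positivity) _)
                (Real.rpow_pos_of_pos (by positivity) _)
          _ = (Real.sin θ^q * (1+Real.cos θ)^(lam-β))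
              / ((y-x)^(2*β) * (2*(x*y))^(lam+1-β)) := hmid
          _ ≤ (Real.sin θ^q * (2:ℝ)^(lam-β))
              / ((y-x)^(2*β) * (2*(x*y))^(lam+1-β)) := by
              apply div_le_div₀ (mul_nonneg (Real.rpow_nonneg hs.le q)
                  (Real.rpow_nonneg (by norm_num) _))
                (mul_le_mul_of_nonneg_left hc1le (Real.rpow_nonneg hs.le q))
                (mul_pos hA2βpos (Real.rpow_pos_of_pos (by linarith) _)) le_rfl
          _ = (2:ℝ)^(lam-β)/((y-x)^(2*β)*(2*(x*y))^(lam+1-β)) * Real.sin θ^q := by ring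
    have hval2 : (∫ θ in (0:ℝ)..π,
        ((2:ℝ)^(lam-β)/((y-x)^(2*β)*(2*(x*y))^(lam+1-β))) * Real.sin θ^q)
        = (2:ℝ)^(lam-β)/((y-x)^(2*β)*(2*(x*y))^(lam+1-β)) * B := by
      rw [hB_def]
      exact intervalIntegral.integral_const_mul _ _
    have h2split : (2*(x*y))^(lam+1-β) = ((2:ℝ)^(lam-β) * 2) * (x*y)^(lam+1-β) := by
      rw [Real.mul_rpow two_pos.le hW.le]
      congr 1
      rw [show lam+1-β = (lam-β)+1 by ring, Real.rpow_add two_pos, Real.rpow_one]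
    have hfin : (2:ℝ)^(lam-β)/((y-x)^(2*β)*(2*(x*y))^(lam+1-β)) * B
        = (B/2)/((y-x)^(2*β) * (x*y)^(lam+1-β)) := by
      rw [h2split]
      have h2β : ((2:ℝ)^(lam-β)) ≠ 0 := (Real.rpow_pos_of_pos two_pos _).ne'
      field_simp
    calc I2 ≤ _ := hstep
      _ = _ := hval2
      _ = _ := hfin
  -- combine
  have hWl : (0:ℝ) < (x*y)^lam := Real.rpow_pos_of_pos hW _
  have key : (B/2) * (y^β * (y-x)^(1-2*β)) ≤ (c1/2) * x^(1-β) := by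
    have k1 : y^β ≤ (3/2) * x^β := by
      calc y^β ≤ ((3/2)*x)^β := Real.rpow_le_rpow hy.le hy32 hβ0.le
      _ = (3/2:ℝ)^β * x^β := Real.mul_rpow (by norm_num) hx.le
      _ ≤ (3/2) * x^β := by
          apply mul_le_mul_of_nonneg_right _ (Real.rpow_nonneg hx.le β)
          calc (3/2:ℝ)^β ≤ (3/2:ℝ)^(1:ℝ) :=
                Real.rpow_le_rpow_of_exponent_le (by norm_num) (by linarith)
          _ = 3/2 := Real.rpow_one _
    have k2 : (y-x)^(1-2*β) ≤ (c1/(3*C2)) * x^(1-2*β) := by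
      calc (y-x)^(1-2*β) ≤ (K*x)^(1-2*β) := Real.rpow_le_rpow ha.le haK.le h12β.le
      _ = K^(1-2*β) * x^(1-2*β) := Real.mul_rpow hK0.le hx.le
      _ ≤ (c1/(3*C2)) * x^(1-2*β) :=
          mul_le_mul_of_nonneg_right hKpow (Real.rpow_nonneg hx.le _)
    have k3 : x^β * x^(1-2*β) = x^(1-β) := by
      rw [← Real.rpow_add hx]; congr 1; ring
    have k4 : y^β * (y-x)^(1-2*β) ≤ ((3/2)*x^β) * ((c1/(3*C2))*x^(1-2*β)) := by
      apply mul_le_mul k1 k2 (Real.rpow_nonneg ha.le _) (by positivity)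
    calc (B/2)*(y^β*(y-x)^(1-2*β)) ≤ C2 * (y^β*(y-x)^(1-2*β)) := by
          apply mul_le_mul_of_nonneg_right (by linarith)
            (mul_nonneg (Real.rpow_nonneg hy.le _) (Real.rpow_nonneg ha.le _))
    _ ≤ C2 * (((3/2)*x^β) * ((c1/(3*C2))*x^(1-2*β))) :=
          mul_le_mul_of_nonneg_left k4 hC20.le
    _ = (c1/2) * (x^β * x^(1-2*β)) := by field_simp
    _ = (c1/2) * x^(1-β) := by rw [k3]
  have hyI2 : y * I2 ≤ (c1/2)/((x*y)^lam * (y-x)) := by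
    have step1 : y * I2 ≤ y * ((B/2)/((y-x)^(2*β)*(x*y)^(lam+1-β))) :=
      mul_le_mul_of_nonneg_left hI2up hy.le
    have iA : (y-x) = (y-x)^(1-2*β) * (y-x)^(2*β) := by
      rw [← Real.rpow_add ha, show 1-2*β+2*β = (1:ℝ) by ring, Real.rpow_one]
    have iy : y = y^β * y^(1-β) := by
      rw [← Real.rpow_add hy, show β+(1-β) = (1:ℝ) by ring, Real.rpow_one]
    have iW : (x*y)^(lam+1-β) = (x*y)^lam * (x^(1-β) * y^(1-β)) := by
      rw [← Real.mul_rpow hx.le hy.le, ← Real.rpow_add hW,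
        show lam+(1-β) = lam+1-β by ring]
    have step2 : y * ((B/2)/((y-x)^(2*β)*(x*y)^(lam+1-β)))
        ≤ (c1/2)/((x*y)^lam * (y-x)) := by
      rw [← mul_div_assoc, div_le_div_iff₀ (by positivity) (by positivity)]
      calc y*(B/2)*((x*y)^lam*(y-x))
          = (y^β*y^(1-β))*(B/2)*((x*y)^lam*((y-x)^(1-2*β)*(y-x)^(2*β))) := by
            rw [← iy, ← iA]
        _ = ((B/2)*(y^β*(y-x)^(1-2*β))) * (y^(1-β)*((x*y)^lam*(y-x)^(2*β))) := by ring
        _ ≤ ((c1/2)*x^(1-β)) * (y^(1-β)*((x*y)^lam*(y-x)^(2*β))) := by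
            apply mul_le_mul_of_nonneg_right key
            positivity
        _ = (c1/2)*((y-x)^(2*β)*(x*y)^(lam+1-β)) := by rw [iW]; ring
    linarith
  have hdiff : (c1/2)/((x*y)^lam*(y-x)) ≤ (y-x)*I1 - y*I2 := by
    have hidd : c1/((x*y)^lam*(y-x)) - (c1/2)/((x*y)^lam*(y-x))
        = (c1/2)/((x*y)^lam*(y-x)) := by ring
    linarith
  rw [hker]
  have hfin2 : (lam*c1/π) * (1/(x^lam*y^lam)) * (1/(y-x))
      = (2*lam/π)*((c1/2)/((x*y)^lam*(y-x))) := by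
    rw [Real.mul_rpow hx.le hy.le]
    have h1 : x^lam ≠ 0 := (Real.rpow_pos_of_pos hx _).ne'
    have h2 : y^lam ≠ 0 := (Real.rpow_pos_of_pos hy _).ne'
    field_simp
  rw [hfin2]
  exact mul_le_mul_of_nonneg_left hdiff (by positivity)
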